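/- arXiv:1110.3419 — 2 statements merged into one kernel-verified Lean document; each statement's English description precedes it below -/
import Mathlib

section
/- For a,b ∈ ℝ with ab < 1 and ab ≠ 0, the measure ν(dx) = (2(1-ab)/π)·√(1-x²)/((1+a²-2ax)(1+b²-2bx)) dx on (-1,1), plus the atom ((a²-1)/(a²-ab))δ_{(a+1/a)/2} if |a|>1 and the atom ((b²-1)/(b²-ab))δ_{(b+1/b)/2} if |b|>1, is a probability measure. -/
open MeasureTheory Set
open Real intervalIntegral

lemma ftc1 {p : ℝ} (hp : 1 < p) :
    ∫ x in (-1:ℝ)..1, Real.sqrt (1 - x^2) / (p - x)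
      = Real.pi * (p - Real.sqrt (p^2 - 1)) := by
  have hq : (0:ℝ) < p^2 - 1 := by nlinarith
  have hq' : (0:ℝ) < Real.sqrt (p^2-1) := Real.sqrt_pos.2 hq
  set F : ℝ → ℝ := fun x => p * Real.arcsin x - Real.sqrt (1 - x^2)
      - Real.sqrt (p^2-1) * Real.arcsin ((p*x - 1)/(p - x)) with hF
  have hcontD : ContinuousOn (fun x : ℝ => Real.sqrt (1 - x^2) / (p - x)) (Icc (-1:ℝ) 1) := by
    apply ContinuousOn.div
    · exact (Real.continuous_sqrt.comp (by continuity)).continuousOn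
    · exact (continuous_const.sub continuous_id).continuousOn
    · intro x hx h; nlinarith [hx.1, hx.2]
  have hint : IntervalIntegrable (fun x : ℝ => Real.sqrt (1 - x^2) / (p - x)) volume (-1) 1 := by
    apply ContinuousOn.intervalIntegrable
    rwa [uIcc_of_le (by norm_num : (-1:ℝ) ≤ 1)]
  have hcontF : ContinuousOn F (Icc (-1:ℝ) 1) := by
    apply ContinuousOn.sub
    apply ContinuousOn.sub
    · exact (continuous_const.mul Real.continuous_arcsin).continuousOn
    · exact (Real.continuous_sqrt.comp (by continuity)).continuousOn
    · apply ContinuousOn.mul continuousOn_const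
      apply Real.continuous_arcsin.comp_continuousOn
      apply ContinuousOn.div
      · exact (by continuity : Continuous fun x:ℝ => p*x-1).continuousOn
      · exact (continuous_const.sub continuous_id).continuousOn
      · intro x hx h; nlinarith [hx.1, hx.2]
  have hderiv : ∀ x ∈ Ioo (-1:ℝ) 1, HasDerivAt F (Real.sqrt (1-x^2)/(p-x)) x := by
    intro x hx
    obtain ⟨h1, h2⟩ := hx
    have hx1 : x ≠ -1 := by linarith
    have hx2 : x ≠ 1 := by linarith
    have hpx : (0:ℝ) < p - x := by linarith
    have hs : (0:ℝ) < Real.sqrt (1 - x^2) := Real.sqrt_pos.2 (by nlinarith)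
    have hs2 : Real.sqrt (1-x^2)^2 = 1 - x^2 := Real.sq_sqrt (by nlinarith)
    have d1 : HasDerivAt (fun x : ℝ => p * Real.arcsin x) (p * (1 / Real.sqrt (1 - x^2))) x :=
      (Real.hasDerivAt_arcsin hx1 hx2).const_mul p
    have d2 : HasDerivAt (fun x : ℝ => Real.sqrt (1 - x^2)) (-(2*x) / (2 * Real.sqrt (1-x^2))) x := by
      have h0 : HasDerivAt (fun x : ℝ => 1 - x^2) (-(2*x)) x := by
        simpa using ((hasDerivAt_pow 2 x).const_sub 1)
      simpa using h0.sqrt (by nlinarith)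
    have hg1 : 1 - ((p*x-1)/(p-x))^2 = (p^2 - 1) * (1 - x^2) / (p-x)^2 := by
      field_simp
      ring
    have hgpos : 0 < 1 - ((p*x-1)/(p-x))^2 := by
      rw [hg1]
      have : (0:ℝ) < 1 - x^2 := by nlinarith
      positivity
    have hga : ((p*x-1)/(p-x)) ≠ -1 := by
      intro h; rw [h] at hgpos; norm_num at hgpos
    have hgb : ((p*x-1)/(p-x)) ≠ 1 := by
      intro h; rw [h] at hgpos; norm_num at hgpos
    have hsg : Real.sqrt (1 - ((p*x-1)/(p-x))^2)
        = Real.sqrt (p^2-1) * Real.sqrt (1-x^2) / (p-x) := by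
      rw [hg1, Real.sqrt_div (by nlinarith : (0:ℝ) ≤ (p^2-1)*(1-x^2)), Real.sqrt_mul hq.le,
        Real.sqrt_sq hpx.le]
    have d3 : HasDerivAt (fun x : ℝ => (p*x-1)/(p-x)) ((p^2-1)/(p-x)^2) x := by
      have hnum : HasDerivAt (fun x : ℝ => p*x-1) p x := by
        simpa using ((hasDerivAt_id x).const_mul p).sub_const 1
      have hden : HasDerivAt (fun x : ℝ => p - x) (-1) x := by
        simpa using (hasDerivAt_id x).const_sub p
      have := hnum.div hden hpx.ne'
      refine this.congr_deriv (Eq.symm ?_)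
      field_simp
      ring
    have d4 : HasDerivAt (fun x : ℝ => Real.arcsin ((p*x-1)/(p-x)))
        ((1 / Real.sqrt (1 - ((p*x-1)/(p-x))^2)) * ((p^2-1)/(p-x)^2)) x :=
      HasDerivAt.comp (h₂ := Real.arcsin) x (Real.hasDerivAt_arcsin hga hgb) d3
    have d5 : HasDerivAt (fun x : ℝ => Real.sqrt (p^2-1) * Real.arcsin ((p*x-1)/(p-x)))
        (Real.sqrt (p^2-1) * ((1 / Real.sqrt (1 - ((p*x-1)/(p-x))^2)) * ((p^2-1)/(p-x)^2))) x :=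
      d4.const_mul _
    have dF := (d1.sub d2).sub d5
    refine dF.congr_deriv (Eq.symm ?_)
    rw [hsg]
    have ht2 : Real.sqrt (p^2-1)^2 = p^2-1 := Real.sq_sqrt hq.le
    field_simp
    linear_combination hs2
  have := intervalIntegral.integral_eq_sub_of_hasDerivAt_of_le (by norm_num : (-1:ℝ) ≤ 1)
      hcontF hderiv hint
  rw [this]
  have e1 : F 1 = Real.pi/2 * (p - Real.sqrt (p^2-1)) := by
    simp only [hF]
    rw [show (p*1-1)/(p-1) = 1 by rw [mul_one]; exact div_self (by linarith), Real.arcsin_one]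
    norm_num
    ring
  have e2 : F (-1) = -(Real.pi/2) * (p - Real.sqrt (p^2-1)) := by
    simp only [hF]
    rw [show (p*(-1)-1)/(p-(-1)) = -1 by
        rw [div_eq_iff (by intro h; nlinarith : p-(-1) ≠ 0)]; ring, Real.arcsin_neg_one]
    norm_num
    ring
  rw [e1, e2]; ring

lemma int_sqrt_div_one_sub : IntervalIntegrable
    (fun x : ℝ => Real.sqrt (1 - x^2) / (1 - x)) volume (-1) 1 := by
  have h0 : IntervalIntegrable (fun x : ℝ => x^(-(1/2):ℝ)) volume 0 2 :=
    intervalIntegral.intervalIntegrable_rpow' (by norm_num)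
  have h1 := h0.comp_sub_left 1
  norm_num at h1
  have hbig : IntervalIntegrable (fun x : ℝ => Real.sqrt 2 * (1-x)^(-(1/2):ℝ)) volume (-1) 1 :=
    (h1.const_mul _).symm
  apply hbig.mono_fun
  · exact ((Real.continuous_sqrt.comp
        (by continuity : Continuous fun x:ℝ => 1 - x^2)).measurable.div
        ((by continuity : Continuous fun x:ℝ => (1:ℝ) - x)).measurable).aestronglyMeasurable
  · rw [uIoc_of_le (by norm_num : (-1:ℝ) ≤ 1)]
    filter_upwards [ae_restrict_mem measurableSet_Ioc] with x hx
    rcases eq_or_lt_of_le hx.2 with h | h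
    · rw [← h]
      simp
    · have hx1 : (0:ℝ) < 1 - x := by linarith
      have hx2 : (0:ℝ) ≤ 1 + x := by linarith [hx.1]
      have e1 : Real.sqrt (1-x^2)/(1-x) = Real.sqrt (1+x) / Real.sqrt (1-x) := by
        rw [show (1:ℝ)-x^2 = (1+x)*(1-x) by ring, Real.sqrt_mul hx2,
          show Real.sqrt (1+x) * Real.sqrt (1-x) / (1-x)
            = Real.sqrt (1+x) * (Real.sqrt (1-x) / (1-x)) by ring,
          Real.sqrt_div_self', one_div]
        rw [div_eq_mul_inv]
      have e2 : (1-x)^(-(1/2):ℝ) = (Real.sqrt (1-x))⁻¹ := by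
        rw [Real.rpow_neg hx1.le, Real.sqrt_eq_rpow]
      rw [e1, e2, Real.norm_eq_abs, Real.norm_eq_abs, abs_of_nonneg (by positivity),
        abs_of_nonneg (by positivity), div_eq_mul_inv]
      exact mul_le_mul_of_nonneg_right
        (Real.sqrt_le_sqrt (by linarith [hx.1])) (by positivity)

lemma ftc1'' : ∫ x in (-1:ℝ)..1, Real.sqrt (1 - x^2) / (1 - x) = Real.pi := by
  set F : ℝ → ℝ := fun x => Real.arcsin x - Real.sqrt (1 - x^2) with hF
  have hcontF : ContinuousOn F (Icc (-1:ℝ) 1) := by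
    apply ContinuousOn.sub
    · exact Real.continuous_arcsin.continuousOn
    · exact (Real.continuous_sqrt.comp (by continuity)).continuousOn
  have hderiv : ∀ x ∈ Ioo (-1:ℝ) 1, HasDerivAt F (Real.sqrt (1-x^2)/(1-x)) x := by
    intro x hx
    obtain ⟨h1, h2⟩ := hx
    have hs : (0:ℝ) < Real.sqrt (1 - x^2) := Real.sqrt_pos.2 (by nlinarith)
    have hs2 : Real.sqrt (1-x^2)^2 = 1 - x^2 := Real.sq_sqrt (by nlinarith)
    have d1 : HasDerivAt Real.arcsin (1 / Real.sqrt (1 - x^2)) x :=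
      Real.hasDerivAt_arcsin (by linarith) (by linarith)
    have d2 : HasDerivAt (fun x : ℝ => Real.sqrt (1 - x^2)) (-(2*x) / (2 * Real.sqrt (1-x^2))) x := by
      have h0 : HasDerivAt (fun x : ℝ => 1 - x^2) (-(2*x)) x := by
        simpa using ((hasDerivAt_pow 2 x).const_sub 1)
      simpa using h0.sqrt (by nlinarith)
    have hx1 : (1:ℝ) - x ≠ 0 := by
      intro h; exact absurd h (by intro hh; linarith)
    refine (d1.sub d2).congr_deriv (Eq.symm ?_)
    field_simp
    linear_combination hs2
  have := intervalIntegral.integral_eq_sub_of_hasDerivAt_of_le (by norm_num : (-1:ℝ) ≤ 1)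
      hcontF hderiv int_sqrt_div_one_sub
  rw [this]
  simp only [hF]
  rw [Real.arcsin_one, Real.arcsin_neg_one]
  norm_num

lemma ftc2 {p : ℝ} (hp : 1 < p) :
    ∫ x in (-1:ℝ)..1, Real.sqrt (1 - x^2) / (p - x)^2
      = Real.pi * (p / Real.sqrt (p^2 - 1) - 1) := by
  have hq : (0:ℝ) < p^2 - 1 := by nlinarith
  have hq' : (0:ℝ) < Real.sqrt (p^2-1) := Real.sqrt_pos.2 hq
  have ht2 : Real.sqrt (p^2-1)^2 = p^2-1 := Real.sq_sqrt hq.le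
  set F : ℝ → ℝ := fun x => (p / Real.sqrt (p^2-1)) * Real.arcsin ((p*x - 1)/(p - x))
      - Real.arcsin x + Real.sqrt (1 - x^2) / (p - x) with hF
  have hne : ∀ x ∈ Icc (-1:ℝ) 1, p - x ≠ 0 := by
    intro x hx h; nlinarith [hx.1, hx.2]
  have hcontD : ContinuousOn (fun x : ℝ => Real.sqrt (1 - x^2) / (p - x)^2) (Icc (-1:ℝ) 1) := by
    apply ContinuousOn.div
    · exact (Real.continuous_sqrt.comp (by continuity)).continuousOn
    · exact ((continuous_const.sub continuous_id).pow 2).continuousOn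
    · intro x hx h
      exact hne x hx (pow_eq_zero_iff (by norm_num) |>.1 h)
  have hint : IntervalIntegrable (fun x : ℝ => Real.sqrt (1 - x^2) / (p - x)^2) volume (-1) 1 := by
    apply ContinuousOn.intervalIntegrable
    rwa [uIcc_of_le (by norm_num : (-1:ℝ) ≤ 1)]
  have hcontF : ContinuousOn F (Icc (-1:ℝ) 1) := by
    apply ContinuousOn.add
    apply ContinuousOn.sub
    · apply ContinuousOn.mul continuousOn_const
      apply Real.continuous_arcsin.comp_continuousOn
      exact ContinuousOn.div (by continuity : Continuous fun x:ℝ => p*x-1).continuousOn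
        (continuous_const.sub continuous_id).continuousOn hne
    · exact Real.continuous_arcsin.continuousOn
    · exact ContinuousOn.div (Real.continuous_sqrt.comp (by continuity)).continuousOn
        (continuous_const.sub continuous_id).continuousOn hne
  have hderiv : ∀ x ∈ Ioo (-1:ℝ) 1, HasDerivAt F (Real.sqrt (1-x^2)/(p-x)^2) x := by
    intro x hx
    obtain ⟨h1, h2⟩ := hx
    have hx1 : x ≠ -1 := by linarith
    have hx2 : x ≠ 1 := by linarith
    have hpx : (0:ℝ) < p - x := by linarith
    have hs : (0:ℝ) < Real.sqrt (1 - x^2) := Real.sqrt_pos.2 (by nlinarith)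
    have hs2 : Real.sqrt (1-x^2)^2 = 1 - x^2 := Real.sq_sqrt (by nlinarith)
    have d2 : HasDerivAt (fun x : ℝ => Real.sqrt (1 - x^2)) (-(2*x) / (2 * Real.sqrt (1-x^2))) x := by
      have h0 : HasDerivAt (fun x : ℝ => 1 - x^2) (-(2*x)) x := by
        simpa using ((hasDerivAt_pow 2 x).const_sub 1)
      simpa using h0.sqrt (by nlinarith)
    have hg1 : 1 - ((p*x-1)/(p-x))^2 = (p^2 - 1) * (1 - x^2) / (p-x)^2 := by
      field_simp; ring
    have hgpos : 0 < 1 - ((p*x-1)/(p-x))^2 := by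
      rw [hg1]
      have h3 : (0:ℝ) < 1 - x^2 := by nlinarith
      positivity
    have hga : ((p*x-1)/(p-x)) ≠ -1 := by intro h; rw [h] at hgpos; norm_num at hgpos
    have hgb : ((p*x-1)/(p-x)) ≠ 1 := by intro h; rw [h] at hgpos; norm_num at hgpos
    have hsg : Real.sqrt (1 - ((p*x-1)/(p-x))^2)
        = Real.sqrt (p^2-1) * Real.sqrt (1-x^2) / (p-x) := by
      rw [hg1, Real.sqrt_div (by nlinarith : (0:ℝ) ≤ (p^2-1)*(1-x^2)), Real.sqrt_mul hq.le,
        Real.sqrt_sq hpx.le]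
    have d3 : HasDerivAt (fun x : ℝ => (p*x-1)/(p-x)) ((p^2-1)/(p-x)^2) x := by
      have hnum : HasDerivAt (fun x : ℝ => p*x-1) p x := by
        simpa using ((hasDerivAt_id x).const_mul p).sub_const 1
      have hden : HasDerivAt (fun x : ℝ => p - x) (-1) x := by
        simpa using (hasDerivAt_id x).const_sub p
      have := hnum.div hden hpx.ne'
      refine this.congr_deriv (Eq.symm ?_)
      field_simp; ring
    have d4 : HasDerivAt (fun x : ℝ => Real.arcsin ((p*x-1)/(p-x)))
        ((1 / Real.sqrt (1 - ((p*x-1)/(p-x))^2)) * ((p^2-1)/(p-x)^2)) x :=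
      HasDerivAt.comp (h₂ := Real.arcsin) x (Real.hasDerivAt_arcsin hga hgb) d3
    have d5 := d4.const_mul (p / Real.sqrt (p^2-1))
    have d1 : HasDerivAt Real.arcsin (1 / Real.sqrt (1 - x^2)) x :=
      Real.hasDerivAt_arcsin hx1 hx2
    have hden : HasDerivAt (fun x : ℝ => p - x) (-1) x := by
      simpa using (hasDerivAt_id x).const_sub p
    have d6 := d2.div hden hpx.ne'
    have dF := (d5.sub d1).add d6
    have e5 : p / Real.sqrt (p^2-1) * (1 / (Real.sqrt (p^2-1) * Real.sqrt (1-x^2) / (p-x))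
        * ((p^2-1)/(p-x)^2)) = p / (Real.sqrt (1-x^2) * (p-x)) := by
      field_simp
      linear_combination -ht2
    refine dF.congr_deriv (Eq.symm ?_)
    rw [hsg, e5]
    field_simp
    ring
  have := intervalIntegral.integral_eq_sub_of_hasDerivAt_of_le (by norm_num : (-1:ℝ) ≤ 1)
      hcontF hderiv hint
  rw [this]
  have e1 : F 1 = (p / Real.sqrt (p^2-1)) * (Real.pi/2) - Real.pi/2 := by
    simp only [hF]
    rw [show (p*1-1)/(p-1) = 1 by rw [mul_one]; exact div_self (by linarith), Real.arcsin_one,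
      show (1:ℝ)-1^2 = 0 by norm_num, Real.sqrt_zero, zero_div, add_zero]
  have e2 : F (-1) = -((p / Real.sqrt (p^2-1)) * (Real.pi/2) - Real.pi/2) := by
    simp only [hF]
    rw [show (p*(-1)-1)/(p-(-1)) = -1 by
        rw [div_eq_iff (by intro h; nlinarith : p-(-1) ≠ 0)]; ring, Real.arcsin_neg_one,
      show (1:ℝ)-(-1)^2 = 0 by norm_num, Real.sqrt_zero, zero_div, add_zero]
    ring
  rw [e1, e2]; ring

lemma intI_pos {a : ℝ} (ha : 0 < a) : IntervalIntegrable
    (fun x : ℝ => Real.sqrt (1 - x^2) / (1 + a^2 - 2*a*x)) volume (-1) 1 := by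
  have hbig : IntervalIntegrable
      (fun x : ℝ => (1/(2*a)) * (Real.sqrt (1-x^2)/(1-x))) volume (-1) 1 :=
    int_sqrt_div_one_sub.const_mul _
  apply hbig.mono_fun
  · exact ((Real.continuous_sqrt.comp
      (by continuity : Continuous fun x:ℝ => 1 - x^2)).measurable.div
      ((by continuity : Continuous fun x:ℝ => 1 + a^2 - 2*a*x)).measurable).aestronglyMeasurable
  · rw [uIoc_of_le (by norm_num : (-1:ℝ) ≤ 1)]
    filter_upwards [ae_restrict_mem measurableSet_Ioc] with x hx
    rcases eq_or_lt_of_le hx.2 with h | h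
    · subst h
      simp
    · have hx0 : (0:ℝ) < 1 - x := by linarith
      have hs : (0:ℝ) ≤ Real.sqrt (1-x^2) := Real.sqrt_nonneg _
      have hD : (0:ℝ) < 1 + a^2 - 2*a*x := by nlinarith [sq_nonneg (a-x), hx.1]
      have hDge : 2*a*(1-x) ≤ 1 + a^2 - 2*a*x := by nlinarith [sq_nonneg (1-a)]
      rw [Real.norm_eq_abs, Real.norm_eq_abs, abs_of_nonneg (by positivity),
        abs_of_nonneg (by positivity)]
      rw [show (1/(2*a)) * (Real.sqrt (1-x^2)/(1-x)) = Real.sqrt (1-x^2)/(2*a*(1-x)) by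
        field_simp]
      exact div_le_div_of_nonneg_left hs (by positivity) hDge
  
lemma intI {a : ℝ} : IntervalIntegrable
    (fun x : ℝ => Real.sqrt (1 - x^2) / (1 + a^2 - 2*a*x)) volume (-1) 1 := by
  rcases lt_trichotomy a 0 with h | h | h
  · have h2 := ((IntervalIntegrable.iff_comp_neg).mp (intI_pos (a := -a) (by linarith))).symm
    simpa using h2
  · subst h
    apply ContinuousOn.intervalIntegrable
    apply ContinuousOn.div
    · exact (Real.continuous_sqrt.comp (by continuity)).continuousOn
    · exact (by continuity : Continuous fun x:ℝ => 1+(0:ℝ)^2-2*0*x).continuousOn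
    · intro x _; norm_num
  · exact intI_pos h

lemma valI_pos {a : ℝ} (ha : 0 < a) :
    ∫ x in (-1:ℝ)..1, Real.sqrt (1 - x^2) / (1 + a^2 - 2*a*x)
      = Real.pi / (2 * max 1 (a^2)) := by
  have ha' : (2*a) ≠ 0 := by positivity
  set p : ℝ := (1+a^2)/(2*a) with hp
  have hden : ∀ x:ℝ, 1 + a^2 - 2*a*x = (2*a)*(p - x) := by
    intro x; rw [hp]; field_simp
  have hfe : (fun x : ℝ => Real.sqrt (1 - x^2) / (1 + a^2 - 2*a*x))
      = fun x : ℝ => (1/(2*a)) * (Real.sqrt (1-x^2)/(p-x)) := by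
    funext x
    rw [hden x, div_mul_div_comm, one_mul]
  rw [hfe, intervalIntegral.integral_const_mul]
  have ha0 : a ≠ 0 := ne_of_gt ha
  rcases eq_or_ne a 1 with h1 | h1
  · subst h1
    have hpe : p = 1 := by rw [hp]; norm_num
    rw [hpe, ftc1'']
    rw [show max (1:ℝ) (1^2) = 1 by norm_num]
    ring
  · have hp1 : 1 < p := by
      have h3 : (0:ℝ) < (a-1)^2 := by
        have : a - 1 ≠ 0 := sub_ne_zero.2 h1
        positivity
      rw [hp, lt_div_iff₀ (by positivity)]
      nlinarith [h3]
    rw [ftc1 hp1]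
    have hsq : p^2 - 1 = ((1-a^2)/(2*a))^2 := by
      rw [hp]; field_simp; ring
    rw [hsq, Real.sqrt_sq_eq_abs, abs_div, abs_of_pos (by positivity : (0:ℝ) < 2*a)]
    rcases lt_or_ge a 1 with h2 | h2
    · rw [abs_of_pos (by nlinarith : (0:ℝ) < 1 - a^2),
        max_eq_left (by nlinarith : a^2 ≤ 1)]
      rw [hp, div_sub_div_same, show 1+a^2 - (1-a^2) = (2*a)*a by ring,
        mul_div_cancel_left₀ _ ha']
      field_simp [ha0]
    · rw [abs_of_nonpos (by nlinarith : (1:ℝ) - a^2 ≤ 0),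
        max_eq_right (by nlinarith : (1:ℝ) ≤ a^2)]
      rw [hp, div_sub_div_same, show 1+a^2 - -(1-(a^2)) = 2 by ring]
      field_simp [ha0]

lemma valI {a : ℝ} (ha : a ≠ 0) :
    ∫ x in (-1:ℝ)..1, Real.sqrt (1 - x^2) / (1 + a^2 - 2*a*x)
      = Real.pi / (2 * max 1 (a^2)) := by
  rcases lt_or_gt_of_ne ha with h | h
  · have e : (fun x : ℝ => Real.sqrt (1-x^2)/(1+a^2-2*a*x))
        = fun x : ℝ => Real.sqrt (1-(-x)^2)/(1+(-a)^2-2*(-a)*(-x)) := by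
      funext x; norm_num
    rw [e, intervalIntegral.integral_comp_neg
      (fun y : ℝ => Real.sqrt (1-y^2)/(1+(-a)^2-2*(-a)*y))]
    simp only [neg_neg]
    rw [valI_pos (a := -a) (by linarith), neg_sq]
  · exact valI_pos h

lemma valI2_pos {a : ℝ} (ha : 0 < a) (ha1 : a < 1) :
    ∫ x in (-1:ℝ)..1, Real.sqrt (1 - x^2) / (1 + a^2 - 2*a*x)^2
      = Real.pi / (2 * (1 - a^2)) := by
  have ha' : (2*a) ≠ 0 := by positivity
  have ha0 : a ≠ 0 := ne_of_gt ha
  have h1a : (0:ℝ) < 1 - a^2 := by nlinarith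
  set p : ℝ := (1+a^2)/(2*a) with hp
  have hden : ∀ x:ℝ, 1 + a^2 - 2*a*x = (2*a)*(p - x) := by
    intro x; rw [hp]; field_simp
  have hfe : (fun x : ℝ => Real.sqrt (1 - x^2) / (1 + a^2 - 2*a*x)^2)
      = fun x : ℝ => (1/(2*a)^2) * (Real.sqrt (1-x^2)/(p-x)^2) := by
    funext x
    rw [hden x, mul_pow, div_mul_div_comm, one_mul]
  rw [hfe, intervalIntegral.integral_const_mul]
  have hp1 : 1 < p := by
    have h3 : (0:ℝ) < (a-1)^2 := by
      have : a - 1 ≠ 0 := by intro h; nlinarith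
      positivity
    rw [hp, lt_div_iff₀ (by positivity)]
    nlinarith [h3]
  rw [ftc2 hp1]
  have hsq : p^2 - 1 = ((1-a^2)/(2*a))^2 := by
    rw [hp]; field_simp; ring
  rw [hsq, Real.sqrt_sq_eq_abs, abs_div, abs_of_pos (by positivity : (0:ℝ) < 2*a),
    abs_of_pos h1a, hp]
  rw [div_div_div_eq]
  field_simp
  ring

lemma valI2 {a : ℝ} (ha : a ≠ 0) (ha1 : a^2 < 1) :
    ∫ x in (-1:ℝ)..1, Real.sqrt (1 - x^2) / (1 + a^2 - 2*a*x)^2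
      = Real.pi / (2 * (1 - a^2)) := by
  rcases lt_or_gt_of_ne ha with h | h
  · have e : (fun x : ℝ => Real.sqrt (1-x^2)/(1+a^2-2*a*x)^2)
        = fun x : ℝ => Real.sqrt (1-(-x)^2)/(1+(-a)^2-2*(-a)*(-x))^2 := by
      funext x; norm_num
    rw [e, intervalIntegral.integral_comp_neg
      (fun y : ℝ => Real.sqrt (1-y^2)/(1+(-a)^2-2*(-a)*y)^2)]
    simp only [neg_neg]
    rw [valI2_pos (a := -a) (by linarith) (by nlinarith), neg_sq]
  · exact valI2_pos h (by nlinarith)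

lemma intI2 {a : ℝ} (ha1 : a^2 < 1) : IntervalIntegrable
    (fun x : ℝ => Real.sqrt (1 - x^2) / ((1 + a^2 - 2*a*x)*(1 + a^2 - 2*a*x))) volume (-1) 1 := by
  apply ContinuousOn.intervalIntegrable
  rw [uIcc_of_le (by norm_num : (-1:ℝ) ≤ 1)]
  apply ContinuousOn.div
  · exact (Real.continuous_sqrt.comp (by continuity)).continuousOn
  · exact (by continuity : Continuous fun x:ℝ => (1+a^2-2*a*x)*(1+a^2-2*a*x)).continuousOn
  · intro x hx
    have hD : (0:ℝ) < 1 + a^2 - 2*a*x := by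
      nlinarith [sq_nonneg (a-x), sq_nonneg (1-a*x), hx.1, hx.2]
    positivity

lemma valJ {a b : ℝ} (hne : a ≠ b) (hab : a*b < 1) (ha : a ≠ 0) (hb : b ≠ 0) :
    ∫ x in (-1:ℝ)..1, Real.sqrt (1-x^2) / ((1+a^2-2*a*x)*(1+b^2-2*b*x))
      = (a * (Real.pi/(2*max 1 (a^2))) - b * (Real.pi/(2*max 1 (b^2))))
        / ((a-b)*(1-a*b)) := by
  have hba : a - b ≠ 0 := sub_ne_zero.2 hne
  have h1ab : (1:ℝ) - a*b ≠ 0 := by intro h; nlinarith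
  have hcongr : EqOn (fun x : ℝ => Real.sqrt (1-x^2) / ((1+a^2-2*a*x)*(1+b^2-2*b*x)))
      (fun x : ℝ => (1/((a-b)*(1-a*b))) *
        (a * (Real.sqrt (1-x^2)/(1+a^2-2*a*x)) - b * (Real.sqrt (1-x^2)/(1+b^2-2*b*x))))
      (uIcc (-1:ℝ) 1) := by
    intro x hx
    rw [uIcc_of_le (by norm_num : (-1:ℝ) ≤ 1)] at hx
    rcases eq_or_lt_of_le ((sq_le_one_iff_abs_le_one x).2 (abs_le.2 ⟨hx.1, hx.2⟩) :
        x^2 ≤ 1) with h | h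
    · simp only
      rw [show (1:ℝ)-x^2 = 0 by linarith, Real.sqrt_zero]
      simp
    · have hDa : (0:ℝ) < 1+a^2-2*a*x := by nlinarith [sq_nonneg (a-x)]
      have hDb : (0:ℝ) < 1+b^2-2*b*x := by nlinarith [sq_nonneg (b-x)]
      simp only
      field_simp
      rw [div_sub_div _ _ (by intro h; nlinarith) (by intro h; nlinarith)]
      ring
  rw [intervalIntegral.integral_congr hcongr, intervalIntegral.integral_const_mul,
    intervalIntegral.integral_sub ((intI (a:=a)).const_mul a) ((intI (a:=b)).const_mul b),
    intervalIntegral.integral_const_mul, intervalIntegral.integral_const_mul,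
    valI ha, valI hb, one_div, inv_mul_eq_div]

lemma Jnonneg (a b : ℝ) : 0 ≤ ∫ x in (-1:ℝ)..1,
    Real.sqrt (1-x^2) / ((1+a^2-2*a*x)*(1+b^2-2*b*x)) := by
  apply intervalIntegral.integral_nonneg (by norm_num : (-1:ℝ) ≤ 1)
  intro x hx
  have hDa : (0:ℝ) ≤ 1+a^2-2*a*x := by nlinarith [sq_nonneg (a-x), hx.1, hx.2]
  have hDb : (0:ℝ) ≤ 1+b^2-2*b*x := by nlinarith [sq_nonneg (b-x), hx.1, hx.2]
  positivity

lemma pf_eqOn {a b : ℝ} (hne : a ≠ b) (hab : a*b < 1) :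
    EqOn (fun x : ℝ => Real.sqrt (1-x^2) / ((1+a^2-2*a*x)*(1+b^2-2*b*x)))
      (fun x : ℝ => (1/((a-b)*(1-a*b))) *
        (a * (Real.sqrt (1-x^2)/(1+a^2-2*a*x)) - b * (Real.sqrt (1-x^2)/(1+b^2-2*b*x))))
      (uIcc (-1:ℝ) 1) := by
  have hba : a - b ≠ 0 := sub_ne_zero.2 hne
  have h1ab : (1:ℝ) - a*b ≠ 0 := by intro h; nlinarith
  intro x hx
  rw [uIcc_of_le (by norm_num : (-1:ℝ) ≤ 1)] at hx
  rcases eq_or_lt_of_le ((sq_le_one_iff_abs_le_one x).2 (abs_le.2 ⟨hx.1, hx.2⟩) :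
      x^2 ≤ 1) with h | h
  · simp only
    rw [show (1:ℝ)-x^2 = 0 by linarith, Real.sqrt_zero]
    simp
  · have hDa : (0:ℝ) < 1+a^2-2*a*x := by nlinarith [sq_nonneg (a-x)]
    have hDb : (0:ℝ) < 1+b^2-2*b*x := by nlinarith [sq_nonneg (b-x)]
    simp only
    field_simp
    rw [div_sub_div _ _ (by intro h; nlinarith) (by intro h; nlinarith)]
    ring


/-- The two-parameter Askey–Wilson measure with parameters `a, b`. -/
noncomputable def askeyWilson (a b : ℝ) : Measure ℝ :=
  volume.withDensity (fun x =>
    ENNReal.ofReal (indicator (Ioo (-1 : ℝ) 1)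
      (fun x => 2 * (1 - a * b) / Real.pi * Real.sqrt (1 - x ^ 2) /
        ((1 + a ^ 2 - 2 * a * x) * (1 + b ^ 2 - 2 * b * x))) x)) +
  (if 1 < |a| then ENNReal.ofReal ((a ^ 2 - 1) / (a ^ 2 - a * b)) else 0) •
    Measure.dirac ((a + 1 / a) / 2) +
  (if 1 < |b| then ENNReal.ofReal ((b ^ 2 - 1) / (b ^ 2 - a * b)) else 0) •
    Measure.dirac ((b + 1 / b) / 2)


set_option maxHeartbeats 1000000 in
theorem askeyWilson_isProbabilityMeasure (a b : ℝ) (hab : a * b < 1) (hab0 : a * b ≠ 0) :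
    IsProbabilityMeasure (askeyWilson a b) := by
  have hπ := Real.pi_pos
  have ha : a ≠ 0 := fun h => hab0 (by rw [h, zero_mul])
  have hb : b ≠ 0 := fun h => hab0 (by rw [h, mul_zero])
  have h1ab : (0:ℝ) < 1 - a*b := by linarith
  set C : ℝ := 2 * (1 - a*b) / Real.pi with hC
  have hC0 : 0 ≤ C := by positivity
  set J := ∫ x in (-1:ℝ)..1, Real.sqrt (1-x^2) / ((1+a^2-2*a*x)*(1+b^2-2*b*x)) with hJ
  have hJ0 : 0 ≤ J := Jnonneg a b
  have hIntJ : IntegrableOn (fun x : ℝ => Real.sqrt (1-x^2) / ((1+a^2-2*a*x)*(1+b^2-2*b*x)))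
      (Ioo (-1:ℝ) 1) volume := by
    rcases eq_or_ne a b with rfl | hne
    · exact (intervalIntegrable_iff_integrableOn_Ioo_of_le (by norm_num)).1
        (intI2 (by nlinarith))
    · have hcomb : IntervalIntegrable (fun x : ℝ => (1/((a-b)*(1-a*b))) *
          (a * (Real.sqrt (1-x^2)/(1+a^2-2*a*x)) - b * (Real.sqrt (1-x^2)/(1+b^2-2*b*x))))
          volume (-1) 1 :=
        (((intI (a:=a)).const_mul a).sub ((intI (a:=b)).const_mul b)).const_mul _
      have h2 := (intervalIntegrable_iff_integrableOn_Ioo_of_le (by norm_num)).1 hcomb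
      apply h2.congr_fun ?_ measurableSet_Ioo
      have hsub : Ioo (-1:ℝ) 1 ⊆ uIcc (-1:ℝ) 1 := by
        rw [uIcc_of_le (by norm_num : (-1:ℝ) ≤ 1)]
        exact Ioo_subset_Icc_self
      exact fun x hx => ((pf_eqOn hne hab) (hsub hx)).symm
  have hfact : (fun x : ℝ => 2*(1-a*b)/Real.pi * Real.sqrt (1-x^2)
        / ((1+a^2-2*a*x)*(1+b^2-2*b*x)))
      = fun x : ℝ => C * (Real.sqrt (1-x^2) / ((1+a^2-2*a*x)*(1+b^2-2*b*x))) := by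
    funext x; rw [hC, mul_div_assoc]
  have hIntf : Integrable (fun x : ℝ => 2*(1-a*b)/Real.pi * Real.sqrt (1-x^2)
      / ((1+a^2-2*a*x)*(1+b^2-2*b*x))) (volume.restrict (Ioo (-1:ℝ) 1)) := by
    rw [hfact]; exact hIntJ.const_mul _
  have hnn : 0 ≤ᵐ[volume.restrict (Ioo (-1:ℝ) 1)]
      (fun x : ℝ => 2*(1-a*b)/Real.pi * Real.sqrt (1-x^2)
        / ((1+a^2-2*a*x)*(1+b^2-2*b*x))) := by
    filter_upwards [ae_restrict_mem measurableSet_Ioo] with x hx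
    have hDa : (0:ℝ) < 1+a^2-2*a*x := by nlinarith [sq_nonneg (a-x), hx.1, hx.2]
    have hDb : (0:ℝ) < 1+b^2-2*b*x := by nlinarith [sq_nonneg (b-x), hx.1, hx.2]
    have h1 : (0:ℝ) ≤ 1 - a*b := h1ab.le
    positivity
  have hval : ∫ x in Ioo (-1:ℝ) 1, (2*(1-a*b)/Real.pi * Real.sqrt (1-x^2)
      / ((1+a^2-2*a*x)*(1+b^2-2*b*x))) = C * J := by
    rw [hfact, ← MeasureTheory.integral_Ioc_eq_integral_Ioo,
      ← intervalIntegral.integral_of_le (by norm_num : (-1:ℝ) ≤ 1),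
      intervalIntegral.integral_const_mul, hJ]
  constructor
  rw [askeyWilson, Measure.add_apply, Measure.add_apply, Measure.smul_apply,
    Measure.smul_apply, smul_eq_mul, smul_eq_mul,
    Measure.dirac_apply_of_mem (mem_univ ((a + 1 / a) / 2)),
    Measure.dirac_apply_of_mem (mem_univ ((b + 1 / b) / 2)), mul_one, mul_one]
  rw [withDensity_apply _ MeasurableSet.univ, Measure.restrict_univ]
  rw [show (fun x => ENNReal.ofReal (indicator (Ioo (-1:ℝ) 1)
      (fun x => 2 * (1 - a * b) / Real.pi * Real.sqrt (1 - x ^ 2) /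
        ((1 + a ^ 2 - 2 * a * x) * (1 + b ^ 2 - 2 * b * x))) x))
      = indicator (Ioo (-1:ℝ) 1) (fun x => ENNReal.ofReal
        (2 * (1 - a * b) / Real.pi * Real.sqrt (1 - x ^ 2) /
        ((1 + a ^ 2 - 2 * a * x) * (1 + b ^ 2 - 2 * b * x)))) by
    funext x; by_cases hx : x ∈ Ioo (-1:ℝ) 1 <;> simp [hx]]
  rw [lintegral_indicator measurableSet_Ioo]
  rw [← ofReal_integral_eq_lintegral_ofReal hIntf hnn, hval]
  -- case analysis
  have habs : ∀ c : ℝ, 1 < |c| → 1 < c^2 := by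
    intro c hc; rw [← sq_abs]; nlinarith [abs_nonneg c]
  have hmax : ∀ c : ℝ, |c| ≤ 1 → max 1 (c^2) = 1 := by
    intro c hc
    exact max_eq_left ((sq_le_one_iff_abs_le_one c).2 hc)
  rcases le_or_gt |a| 1 with hA | hA <;> rcases le_or_gt |b| 1 with hB | hB
  · -- both small, no atoms
    rw [if_neg (not_lt.2 hA), if_neg (not_lt.2 hB), add_zero, add_zero]
    have hCJ : C * J = 1 := by
      rcases eq_or_ne a b with rfl | hne
      · have hJv : J = Real.pi / (2 * (1 - a^2)) := by
          rw [hJ]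
          simp only [← pow_two]
          exact valI2 ha (by nlinarith)
        rw [hJv, hC]
        have : (1:ℝ) - a^2 ≠ 0 := by nlinarith
        field_simp
      · have hJv := valJ hne hab ha hb
        rw [hJ, hJv, hmax a hA, hmax b hB, hC]
        have hba : a - b ≠ 0 := sub_ne_zero.2 hne
        field_simp
    rw [hCJ, ENNReal.ofReal_one]
  · -- atom at b
    rw [if_neg (not_lt.2 hA), if_pos hB, add_zero]
    have hb2 : 1 < b^2 := habs b hB
    have hne : a ≠ b := by
      intro h; rw [h] at hA
      have := habs b hB
      nlinarith [abs_nonneg b, sq_abs b]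
    have hβd : (0:ℝ) < b^2 - a*b := by linarith
    have hJv : J = (a * (Real.pi/(2*1)) - b * (Real.pi/(2*(b^2)))) / ((a-b)*(1-a*b)) := by
      rw [hJ, valJ hne hab ha hb, hmax a hA, max_eq_right (by linarith : (1:ℝ) ≤ b^2)]
    have hsum : C * J + (b^2-1)/(b^2-a*b) = 1 := by
      rw [hJv, hC]
      have hba : a - b ≠ 0 := sub_ne_zero.2 hne
      field_simp
      ring
    rw [← ENNReal.ofReal_add (mul_nonneg hC0 hJ0) (div_nonneg (by linarith) hβd.le),
      hsum, ENNReal.ofReal_one]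
  · -- atom at a
    rw [if_pos hA, if_neg (not_lt.2 hB), add_zero]
    have ha2 : 1 < a^2 := habs a hA
    have hne : a ≠ b := by
      intro h; rw [← h] at hB
      nlinarith [abs_nonneg a, sq_abs a]
    have hαd : (0:ℝ) < a^2 - a*b := by linarith
    have hJv : J = (a * (Real.pi/(2*(a^2))) - b * (Real.pi/(2*1))) / ((a-b)*(1-a*b)) := by
      rw [hJ, valJ hne hab ha hb, hmax b hB, max_eq_right (by linarith : (1:ℝ) ≤ a^2)]
    have hsum : C * J + (a^2-1)/(a^2-a*b) = 1 := by
      rw [hJv, hC]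
      have hba : a - b ≠ 0 := sub_ne_zero.2 hne
      field_simp
      ring
    rw [← ENNReal.ofReal_add (mul_nonneg hC0 hJ0) (div_nonneg (by linarith) hαd.le),
      hsum, ENNReal.ofReal_one]
  · -- both atoms
    rw [if_pos hA, if_pos hB]
    have ha2 : 1 < a^2 := habs a hA
    have hb2 : 1 < b^2 := habs b hB
    have hne : a ≠ b := by
      intro h; rw [← h] at hab
      nlinarith
    have hαd : (0:ℝ) < a^2 - a*b := by linarith
    have hβd : (0:ℝ) < b^2 - a*b := by linarith
    have hJv : J = (a * (Real.pi/(2*(a^2))) - b * (Real.pi/(2*(b^2)))) / ((a-b)*(1-a*b)) := by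
      rw [hJ, valJ hne hab ha hb, max_eq_right (by linarith : (1:ℝ) ≤ a^2),
        max_eq_right (by linarith : (1:ℝ) ≤ b^2)]
    have hsum : C * J + (a^2-1)/(a^2-a*b) + (b^2-1)/(b^2-a*b) = 1 := by
      rw [hJv, hC]
      have hba : a - b ≠ 0 := sub_ne_zero.2 hne
      field_simp
      ring
    rw [← ENNReal.ofReal_add (mul_nonneg hC0 hJ0) (div_nonneg (by linarith) hαd.le),
      ← ENNReal.ofReal_add (add_nonneg (mul_nonneg hC0 hJ0) (div_nonneg (by linarith) hαd.le))
        (div_nonneg (by linarith) hβd.le), hsum, ENNReal.ofReal_one]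
end

section
/- With notation as before, define β_n = Σ_{k=1}^{n+1} R_k Σ_{i_1+...+i_k = n-k+1} α_{i_1} δ_{i_2}···δ_{i_k} for n ≥ 0. Then B(z)=Σ β_n z^n satisfies B(z) = A(z)·r(zD(z)) = zD(z)r²(zD(z)) + r(zD(z)) as formal power series. -/
open PowerSeries Finset

/-- Formal composition `f ∘ g` of power series, valid when `g` has zero constant term
(in which case `coeff n (g ^ k) = 0` for `k > n`, so the sum below is the full sum). -/
noncomputable def pcomp (f g : PowerSeries ℂ) : PowerSeries ℂ :=
  PowerSeries.mk fun n =>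
    ∑ k ∈ Finset.range (n + 1), PowerSeries.coeff k f * PowerSeries.coeff n (g ^ k)

lemma sum_adT_succ' (k n : ℕ) (F G : ℕ → ℂ) :
    ∑ x ∈ Finset.Nat.antidiagonalTuple (k+1) n, F (x 0) * ∏ i : Fin k, G (x i.succ)
    = ∑ p ∈ Finset.HasAntidiagonal.antidiagonal n, F p.1 *
        ∑ y ∈ Finset.Nat.antidiagonalTuple k p.2, ∏ i, G (y i) := by
  have : ∀ p ∈ Finset.HasAntidiagonal.antidiagonal n,
      F p.1 * ∑ y ∈ Finset.Nat.antidiagonalTuple k p.2, ∏ i, G (y i)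
      = ∑ y ∈ Finset.Nat.antidiagonalTuple k p.2, F p.1 * ∏ i, G (y i) := by
    intro p _; rw [Finset.mul_sum]
  rw [Finset.sum_congr rfl this, ← Finset.sum_sigma (s := Finset.HasAntidiagonal.antidiagonal n)
    (t := fun p => Finset.Nat.antidiagonalTuple k p.2)
    (f := fun q => F q.1.1 * ∏ i, G (q.2 i))]
  refine Finset.sum_nbij' (fun x => ⟨(x 0, n - x 0), Fin.tail x⟩)
    (fun q => Fin.cons q.1.1 q.2) ?_ ?_ ?_ ?_ ?_
  · intro x hx
    rw [Finset.Nat.mem_antidiagonalTuple, Fin.sum_univ_succ] at hx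
    have htail : ∑ i : Fin k, Fin.tail x i = ∑ i : Fin k, x i.succ := rfl
    simp only [Finset.mem_sigma, Finset.HasAntidiagonal.mem_antidiagonal,
      Finset.Nat.mem_antidiagonalTuple, htail]
    omega
  · intro q hq
    simp only [Finset.mem_sigma, Finset.HasAntidiagonal.mem_antidiagonal,
      Finset.Nat.mem_antidiagonalTuple] at hq
    rw [Finset.Nat.mem_antidiagonalTuple, Fin.sum_univ_succ]
    simp only [Fin.cons_zero]
    have : ∑ i : Fin k, (Fin.cons q.1.1 q.2 : Fin (k+1) → ℕ) i.succ = ∑ i : Fin k, q.2 i := by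
      apply Finset.sum_congr rfl; intro i _; rw [Fin.cons_succ]
    omega
  · intro x hx
    exact Fin.cons_self_tail x
  · intro q hq
    simp only [Finset.mem_sigma, Finset.HasAntidiagonal.mem_antidiagonal,
      Finset.Nat.mem_antidiagonalTuple] at hq
    simp only [Fin.cons_zero, Fin.tail_cons]
    obtain ⟨⟨a, b⟩, y⟩ := q
    simp only [Fin.cons_zero, Fin.tail_cons]
    simp only at hq
    obtain ⟨h1, h2⟩ := hq
    have : n - a = b := by omega
    rw [this]
  · intro x hx
    simp only [Fin.tail]

lemma coeff_mk_pow' (δ : ℕ → ℂ) (k n : ℕ) :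
    PowerSeries.coeff n ((PowerSeries.mk δ) ^ k)
    = ∑ x ∈ Finset.Nat.antidiagonalTuple k n, ∏ i, δ (x i) := by
  induction k generalizing n with
  | zero =>
    cases n with
    | zero => simp [Finset.Nat.antidiagonalTuple_zero_zero]
    | succ m => simp [Finset.Nat.antidiagonalTuple_zero_succ]
  | succ k ih =>
    rw [pow_succ', PowerSeries.coeff_mul]
    have h1 : ∀ x ∈ Finset.Nat.antidiagonalTuple (k+1) n,
        (∏ i, δ (x i)) = δ (x 0) * ∏ i : Fin k, δ (x i.succ) := by
      intro x _; rw [Fin.prod_univ_succ]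
    rw [Finset.sum_congr rfl h1, sum_adT_succ']
    apply Finset.sum_congr rfl
    intro p _
    rw [PowerSeries.coeff_mk, ih]

lemma coeff_Xmul_pow_lt' (δ : ℕ → ℂ) {k m : ℕ} (h : m < k) :
    PowerSeries.coeff m ((PowerSeries.X * PowerSeries.mk δ) ^ k) = 0 := by
  rw [mul_pow, PowerSeries.coeff_mul]
  apply Finset.sum_eq_zero
  intro p hp
  rw [Finset.HasAntidiagonal.mem_antidiagonal] at hp
  rw [PowerSeries.coeff_X_pow, if_neg (by omega)]
  ring

lemma coeff_mul_Xmul_pow' (δ : ℕ → ℂ) (f : PowerSeries ℂ) (m k : ℕ) :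
    PowerSeries.coeff (m + k) (f * (PowerSeries.X * PowerSeries.mk δ) ^ k)
    = PowerSeries.coeff m (f * (PowerSeries.mk δ) ^ k) := by
  have : f * (PowerSeries.X * PowerSeries.mk δ) ^ k
      = PowerSeries.X ^ k * (f * (PowerSeries.mk δ) ^ k) := by ring
  rw [this, PowerSeries.coeff_X_pow_mul]

/-- Expansion of `coeff n (f * pcomp r g)` with `g = X * mk δ`. -/
lemma coeff_mul_pcomp' (δ : ℕ → ℂ) (r f : PowerSeries ℂ) (n : ℕ) :
    PowerSeries.coeff n (f * pcomp r (PowerSeries.X * PowerSeries.mk δ))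
    = ∑ k ∈ Finset.range (n + 1), PowerSeries.coeff k r *
        PowerSeries.coeff n (f * (PowerSeries.X * PowerSeries.mk δ) ^ k) := by
  rw [PowerSeries.coeff_mul]
  have h1 : ∀ p ∈ Finset.HasAntidiagonal.antidiagonal n,
      PowerSeries.coeff p.1 f *
        PowerSeries.coeff p.2 (pcomp r (PowerSeries.X * PowerSeries.mk δ))
      = ∑ k ∈ Finset.range (n + 1), PowerSeries.coeff k r *
          (PowerSeries.coeff p.1 f *
            PowerSeries.coeff p.2 ((PowerSeries.X * PowerSeries.mk δ) ^ k)) := by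
    intro p hp
    rw [Finset.HasAntidiagonal.mem_antidiagonal] at hp
    rw [pcomp, PowerSeries.coeff_mk, Finset.mul_sum]
    rw [Finset.sum_subset (Finset.range_subset_range.2 (by omega : p.2 + 1 ≤ n + 1))]
    · apply Finset.sum_congr rfl; intro k _; ring
    · intro k _ hk
      rw [Finset.mem_range, not_lt] at hk
      rw [coeff_Xmul_pow_lt' δ (by omega)]
      ring
  rw [Finset.sum_congr rfl h1, Finset.sum_comm]
  apply Finset.sum_congr rfl
  intro k _
  rw [← Finset.mul_sum, PowerSeries.coeff_mul]

/-- With `αₙ` as before and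
`βₙ = Σ_{k=1}^{n+1} R_k Σ_{i₁+⋯+i_k = n-k+1} α_{i₁} δ_{i₂}⋯δ_{i_k}`, the generating
function `B(z) = Σ βₙ zⁿ` satisfies `B = A·r(zD) = zD·r²(zD) + r(zD)`. -/
theorem genfun_B_eq (δ R : ℕ → ℂ) (α β : ℕ → ℂ) (hα0 : α 0 = 1)
    (hα : ∀ n : ℕ, 1 ≤ n → α n =
      ∑ k ∈ Finset.Icc 1 n, R k *
        ∑ x ∈ Finset.Nat.antidiagonalTuple k (n - k), ∏ i, δ (x i))
    (hβ : ∀ n : ℕ, β n =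
      ∑ j ∈ Finset.range (n + 1), R (j + 1) *
        ∑ x ∈ Finset.Nat.antidiagonalTuple (j + 1) (n - j),
          α (x 0) * ∏ i : Fin j, δ (x i.succ)) :
    PowerSeries.mk β =
      PowerSeries.mk α *
        pcomp (PowerSeries.mk fun k => R (k + 1)) (PowerSeries.X * PowerSeries.mk δ) ∧
    PowerSeries.mk β =
      (PowerSeries.X * PowerSeries.mk δ) *
        (pcomp (PowerSeries.mk fun k => R (k + 1)) (PowerSeries.X * PowerSeries.mk δ)) ^ 2 +
      pcomp (PowerSeries.mk fun k => R (k + 1)) (PowerSeries.X * PowerSeries.mk δ) := by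
  set g := PowerSeries.X * PowerSeries.mk δ with hg
  set rC := pcomp (PowerSeries.mk fun k => R (k + 1)) g with hrC
  -- Part 1 : mk β = mk α * rC
  have part1 : PowerSeries.mk β = PowerSeries.mk α * rC := by
    ext n
    rw [PowerSeries.coeff_mk, hβ n, hrC, hg, coeff_mul_pcomp']
    apply Finset.sum_congr rfl
    intro j hj
    rw [Finset.mem_range] at hj
    congr 1
    · rw [PowerSeries.coeff_mk]
    have hn : PowerSeries.coeff n (PowerSeries.mk α * (PowerSeries.X * PowerSeries.mk δ) ^ j)
        = PowerSeries.coeff (n - j) (PowerSeries.mk α * (PowerSeries.mk δ) ^ j) := by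
      conv_lhs => rw [show n = (n - j) + j by omega]
      rw [coeff_mul_Xmul_pow']
    rw [hn, PowerSeries.coeff_mul]
    have h2 : ∀ x ∈ Finset.Nat.antidiagonalTuple (j+1) (n-j),
        α (x 0) * ∏ i : Fin j, δ (x i.succ)
        = (fun m => α m) (x 0) * ∏ i : Fin j, δ (x i.succ) := fun _ _ => rfl
    rw [Finset.sum_congr rfl h2, sum_adT_succ']
    apply Finset.sum_congr rfl
    intro p _
    rw [PowerSeries.coeff_mk, coeff_mk_pow']
  -- A-identity : mk α = 1 + g * rC
  have hA : PowerSeries.mk α = 1 + g * rC := by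
    ext n
    cases n with
    | zero =>
      rw [PowerSeries.coeff_mk, hα0, map_add, hg]
      have : PowerSeries.X * PowerSeries.mk δ * rC
          = PowerSeries.X * (PowerSeries.mk δ * rC) := by ring
      rw [this]
      simp
    | succ m =>
      rw [PowerSeries.coeff_mk, hα (m+1) (by omega), map_add]
      have h0 : PowerSeries.coeff (m+1) (1 : PowerSeries ℂ) = 0 := by
        rw [PowerSeries.coeff_one, if_neg (by omega)]
      rw [h0, zero_add]
      have hgr : g * rC = g * pcomp (PowerSeries.mk fun k => R (k + 1)) g := rfl
      rw [hgr, hg, coeff_mul_pcomp']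
      have h3 : ∀ k ∈ Finset.range (m + 2),
          PowerSeries.coeff k (PowerSeries.mk fun k => R (k + 1)) *
            PowerSeries.coeff (m+1)
              ((PowerSeries.X * PowerSeries.mk δ) * (PowerSeries.X * PowerSeries.mk δ) ^ k)
          = R (k+1) * PowerSeries.coeff (m+1)
              ((1 : PowerSeries ℂ) * (PowerSeries.X * PowerSeries.mk δ) ^ (k+1)) := by
        intro k _
        rw [PowerSeries.coeff_mk, one_mul, ← pow_succ']
      rw [Finset.sum_congr rfl h3, Finset.sum_range_succ]
      have hlast : PowerSeries.coeff (m+1)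
          ((1 : PowerSeries ℂ) * (PowerSeries.X * PowerSeries.mk δ) ^ (m+2)) = 0 := by
        rw [one_mul, coeff_Xmul_pow_lt' δ (by omega)]
      rw [hlast, mul_zero, add_zero]
      rw [← Finset.Ico_add_one_right_eq_Icc, Finset.sum_Ico_eq_sum_range]
      simp only [show m + 1 + 1 - 1 = m + 1 from rfl]
      apply Finset.sum_congr rfl
      intro k hk
      rw [Finset.mem_range] at hk
      have hcoeff : PowerSeries.coeff (m+1)
          ((1 : PowerSeries ℂ) * (PowerSeries.X * PowerSeries.mk δ) ^ (k+1))
          = ∑ x ∈ Finset.Nat.antidiagonalTuple (k+1) (m - k), ∏ i, δ (x i) := by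
        conv_lhs => rw [show m + 1 = (m - k) + (k + 1) by omega]
        rw [coeff_mul_Xmul_pow', one_mul, coeff_mk_pow']
      rw [hcoeff]
      have h1k : 1 + k = k + 1 := by omega
      rw [h1k, show m + 1 - (k + 1) = m - k by omega]
  refine ⟨part1, ?_⟩
  rw [part1, hA]
  ring
end
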